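/- Let A : ℝ^{m×n} → ℝ^p satisfy the rank-RIP with constant δ_k, and let S be a set of orthonormal rank-1 matrices with rank(P_S X) ≤ k for all X ∈ ℝ^{m×n}. Then for all X ∈ ℝ^{m×n}, (1−δ_k)‖P_S X‖_F ≤ ‖P_S A* A P_S X‖_F ≤ (1+δ_k)‖P_S X‖_F. -/

import Mathlib

open scoped BigOperators

noncomputable def frobInner {m n : ℕ} (X Y : Matrix (Fin m) (Fin n) ℝ) : ℝ :=
  ∑ i, ∑ j, X i j * Y i j

noncomputable def frobNorm {m n : ℕ} (X : Matrix (Fin m) (Fin n) ℝ) : ℝ :=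
  Real.sqrt (frobInner X X)

lemma frobInner_comm {m n : ℕ} (X Y : Matrix (Fin m) (Fin n) ℝ) :
    frobInner X Y = frobInner Y X := by
  simp [frobInner, mul_comm]

lemma frobInner_add_left {m n : ℕ} (X Y Z : Matrix (Fin m) (Fin n) ℝ) :
    frobInner (X + Y) Z = frobInner X Z + frobInner Y Z := by
  simp [frobInner, Matrix.add_apply, add_mul, Finset.sum_add_distrib]

lemma frobInner_smul_left {m n : ℕ} (t : ℝ) (X Z : Matrix (Fin m) (Fin n) ℝ) :
    frobInner (t • X) Z = t * frobInner X Z := by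
  simp [frobInner, Matrix.smul_apply, smul_eq_mul, Finset.mul_sum, mul_assoc]

lemma frobInner_add_right {m n : ℕ} (X Y Z : Matrix (Fin m) (Fin n) ℝ) :
    frobInner X (Y + Z) = frobInner X Y + frobInner X Z := by
  rw [frobInner_comm, frobInner_add_left, frobInner_comm Y X, frobInner_comm Z X]

lemma frobInner_smul_right {m n : ℕ} (t : ℝ) (X Z : Matrix (Fin m) (Fin n) ℝ) :
    frobInner X (t • Z) = t * frobInner X Z := by
  rw [frobInner_comm, frobInner_smul_left, frobInner_comm Z X]

lemma frobInner_self_nonneg {m n : ℕ} (X : Matrix (Fin m) (Fin n) ℝ) :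
    0 ≤ frobInner X X := by
  apply Finset.sum_nonneg; intro i _; apply Finset.sum_nonneg; intro j _
  exact mul_self_nonneg _

lemma frobNorm_sq {m n : ℕ} (X : Matrix (Fin m) (Fin n) ℝ) :
    frobNorm X ^ 2 = frobInner X X :=
  Real.sq_sqrt (frobInner_self_nonneg X)

lemma frobInner_sq_le {m n : ℕ} (X Y : Matrix (Fin m) (Fin n) ℝ) :
    frobInner X Y ^ 2 ≤ frobInner X X * frobInner Y Y := by
  have h1 : ∀ Z W : Matrix (Fin m) (Fin n) ℝ,
      frobInner Z W = ∑ q : Fin m × Fin n, Z q.1 q.2 * W q.1 q.2 := by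
    intro Z W
    rw [frobInner, Fintype.sum_prod_type]
  rw [h1, h1, h1]
  have := Finset.sum_mul_sq_le_sq_mul_sq Finset.univ
    (fun q : Fin m × Fin n => X q.1 q.2) (fun q : Fin m × Fin n => Y q.1 q.2)
  simpa [sq] using this

set_option maxHeartbeats 1000000 in
/-- If `A` satisfies rank-RIP with constant `δ` at rank `k` and `P_S` is the
orthogonal projection onto a subspace all of whose elements have rank at most `k`,
then `(1−δ)‖P_S X‖_F ≤ ‖P_S A* A P_S X‖_F ≤ (1+δ)‖P_S X‖_F` for all `X`. -/
theorem rip_projected_operator_bounds {m n p k : ℕ}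
    (δ : ℝ)
    (A : Matrix (Fin m) (Fin n) ℝ →ₗ[ℝ] EuclideanSpace ℝ (Fin p))
    (hRIP : ∀ X : Matrix (Fin m) (Fin n) ℝ, X.rank ≤ k →
      (1 - δ) * frobNorm X ^ 2 ≤ ‖A X‖ ^ 2 ∧ ‖A X‖ ^ 2 ≤ (1 + δ) * frobNorm X ^ 2)
    (Astar : EuclideanSpace ℝ (Fin p) →ₗ[ℝ] Matrix (Fin m) (Fin n) ℝ)
    (hadj : ∀ (X : Matrix (Fin m) (Fin n) ℝ) (v : EuclideanSpace ℝ (Fin p)),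
      (inner ℝ (A X) v : ℝ) = frobInner X (Astar v))
    (P : Matrix (Fin m) (Fin n) ℝ →ₗ[ℝ] Matrix (Fin m) (Fin n) ℝ)
    (hidem : ∀ X, P (P X) = P X)
    (hsa : ∀ X Y, frobInner (P X) Y = frobInner X (P Y))
    (hrank : ∀ X, (P X).rank ≤ k)
    (X : Matrix (Fin m) (Fin n) ℝ) :
    (1 - δ) * frobNorm (P X) ≤ frobNorm (P (Astar (A (P X)))) ∧
    frobNorm (P (Astar (A (P X)))) ≤ (1 + δ) * frobNorm (P X) := by
  set Y : Matrix (Fin m) (Fin n) ℝ := P X with hYdef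
  set W : Matrix (Fin m) (Fin n) ℝ := P (Astar (A Y)) with hWdef
  have hPY : P Y = Y := hidem X
  have hPW : P W = W := hidem _
  set a : ℝ := frobInner Y Y with hadef
  set b : ℝ := frobInner W W with hbdef
  set c : ℝ := frobInner W Y with hcdef
  set f : ℝ := ‖A W‖ ^ 2 with hfdef
  set r : ℝ := frobNorm Y with hrdef
  set s : ℝ := frobNorm W with hsdef
  have hr0 : 0 ≤ r := Real.sqrt_nonneg _
  have hs0 : 0 ≤ s := Real.sqrt_nonneg _
  have hra : r ^ 2 = a := frobNorm_sq Y
  have hsb : s ^ 2 = b := frobNorm_sq W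
  -- c equals ‖A Y‖²
  have hc : c = ‖A Y‖ ^ 2 := by
    have h1 : c = frobInner Y (Astar (A Y)) := by
      rw [hcdef, hWdef, hsa, hPY, frobInner_comm]
    rw [h1, ← hadj, real_inner_self_eq_norm_sq]
  have hc0 : 0 ≤ c := by rw [hc]; positivity
  -- b equals ⟪A W, A Y⟫
  have hb : b = (inner ℝ (A W) (A Y) : ℝ) := by
    have h1 : b = frobInner W (Astar (A Y)) := by
      conv_lhs => rw [hbdef]
      conv_lhs => rw [hWdef]
      rw [show frobInner W (P (Astar (A Y))) = frobInner (P W) (Astar (A Y)) from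
        (hsa W _).symm, hPW]
    rw [h1, ← hadj]
  -- b = 0 when A Y = 0
  have hbz : c = 0 → b = 0 := by
    intro hcz
    have hAY : A Y = 0 := by
      have h0 : ‖A Y‖ = 0 := by
        rw [hcz] at hc
        nlinarith [norm_nonneg (A Y), hc]
      exact norm_eq_zero.mp h0
    rw [hb, hAY, inner_zero_right]
  -- RIP at Y
  have hRIPY := hRIP Y (hrank X)
  have hc1 : (1 - δ) * a ≤ c := by rw [hc, ← hra]; exact hRIPY.1
  have hc2 : c ≤ (1 + δ) * a := by rw [hc, ← hra]; exact hRIPY.2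
  -- Cauchy–Schwarz
  have hcs : c ^ 2 ≤ b * a := frobInner_sq_le W Y
  -- quadratic RIP inequalities
  have hq : ∀ t : ℝ,
      (1 - δ) * (a + 2 * t * c + t ^ 2 * b) ≤ c + 2 * t * b + t ^ 2 * f ∧
      c + 2 * t * b + t ^ 2 * f ≤ (1 + δ) * (a + 2 * t * c + t ^ 2 * b) := by
    intro t
    have hZ : Y + t • W = P (X + t • Astar (A Y)) := by
      rw [map_add, map_smul, ← hYdef, ← hWdef]
    have hrankZ : (Y + t • W).rank ≤ k := by rw [hZ]; exact hrank _
    have hn : frobNorm (Y + t • W) ^ 2 = a + 2 * t * c + t ^ 2 * b := by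
      rw [frobNorm_sq]
      simp only [frobInner_add_left, frobInner_add_right, frobInner_smul_left,
        frobInner_smul_right]
      rw [hadef, hbdef, hcdef, frobInner_comm Y W]
      ring
    have hAn : ‖A (Y + t • W)‖ ^ 2 = c + 2 * t * b + t ^ 2 * f := by
      have hAe : A (Y + t • W) = A Y + t • A W := by rw [map_add, map_smul]
      rw [hAe, ← real_inner_self_eq_norm_sq, real_inner_add_add_self]
      simp only [real_inner_smul_left, real_inner_smul_right]
      rw [real_inner_self_eq_norm_sq, real_inner_self_eq_norm_sq,
        real_inner_comm (A W) (A Y), hc, hb, hfdef]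
      ring
    have := hRIP (Y + t • W) hrankZ
    rw [hn, hAn] at this
    exact this
  -- now everything is scalar arithmetic
  clear_value a b c f r s
  clear hc hb hRIPY hadef hbdef hcdef hfdef hrdef hsdef hPY hPW hWdef hYdef
  clear hRIP hadj hsa hrank hidem
  clear Astar A P W Y X
  have hba : b * a = (r * s) ^ 2 := by rw [← hra, ← hsb]; ring
  have hcs' : c ^ 2 ≤ (r * s) ^ 2 := by rw [← hba]; exact hcs
  have hcrs : c ≤ r * s := by
    nlinarith [hcs', hc0, mul_nonneg hr0 hs0]
  constructor
  · -- lower bound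
    rcases le_or_gt (1 - δ) 0 with hδ | hδ
    · calc (1 - δ) * r ≤ 0 := mul_nonpos_of_nonpos_of_nonneg hδ hr0
        _ ≤ s := hs0
    · rcases eq_or_lt_of_le hr0 with hr | hr
      · rw [← hr]; simpa using hs0
      · have h1 : (1 - δ) * (r * r) ≤ r * s := by nlinarith
        nlinarith
  · -- upper bound
    rcases eq_or_lt_of_le hs0 with hs | hs
    · rw [← hs]
      rcases eq_or_lt_of_le hr0 with hr | hr
      · rw [← hr]; simp
      · have hcz : c ≤ 0 := by rw [← hs] at hcrs; linarith
        have ha0 : 0 < a := by nlinarith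
        have hδ1 : 1 - δ ≤ 0 := by nlinarith
        have : 0 < 1 + δ := by linarith
        positivity
    · rcases eq_or_lt_of_le hr0 with hr | hr
      · exfalso
        have hcz : c = 0 := le_antisymm (by rw [← hr] at hcrs; linarith) hc0
        have := hbz hcz
        nlinarith
      · set t₀ : ℝ := r / s with ht₀def
        have ht₀ : 0 < t₀ := div_pos hr hs
        have hts : s * t₀ = r := by rw [ht₀def]; field_simp
        have ht0sq : t₀ ^ 2 * b = a := by
          rw [← hsb, ← hra, ht₀def, div_pow]
          field_simp
        have h1 := (hq t₀).2
        have h2 := (hq (-t₀)).1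
        simp only [neg_sq] at h2
        rw [ht0sq] at h1 h2
        have h5 : t₀ * b ≤ t₀ * c + δ * a := by linarith [h1, h2]
        have h7 : r * b ≤ r * c + s * (δ * a) := by
          calc r * b = s * (t₀ * b) := by rw [← hts]; ring
            _ ≤ s * (t₀ * c + δ * a) := mul_le_mul_of_nonneg_left h5 hs0
            _ = (s * t₀) * c + s * (δ * a) := by ring
            _ = r * c + s * (δ * a) := by rw [hts]
        have h7' : r * s ^ 2 ≤ r * c + s * (δ * r ^ 2) := by rw [hsb, hra]; exact h7
        have hc2' : c ≤ (1 + δ) * r ^ 2 := by rw [hra]; exact hc2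
        by_contra hcon
        push_neg at hcon
        have hsum : (0:ℝ) < s + r := by linarith
        have hd : (0:ℝ) < s - (1 + δ) * r := by linarith
        nlinarith [h7', mul_pos (mul_pos hr hd) hsum,
          mul_le_mul_of_nonneg_left hc2' hr.le]
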